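/- The derivative m′ of m(x) = (tanh(x)/x)^{1/2} on (0,∞) satisfies |m′(x)|² ≲ x^{-3} for x sufficiently large; in particular m′ is square-integrable on (1,∞). -/

import Mathlib

open Real MeasureTheory Set

lemma hasDerivAt_tanh' (x : ℝ) :
    HasDerivAt Real.tanh (1 / Real.cosh x ^ 2) x := by
  have h := (Real.hasDerivAt_sinh x).div (Real.hasDerivAt_cosh x)
    (ne_of_gt (Real.cosh_pos x))
  have heq : (fun y => Real.sinh y / Real.cosh y) = Real.tanh := by
    funext y; rw [Real.tanh_eq_sinh_div_cosh]
  rw [show (Real.sinh / Real.cosh) = (fun y => Real.sinh y / Real.cosh y) from rfl, heq] at h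
  have := Real.cosh_sq_sub_sinh_sq x
  rw [show Real.cosh x * Real.cosh x - Real.sinh x * Real.sinh x = 1 by nlinarith [Real.cosh_pos x]] at h
  exact h

lemma tanh_mono {a b : ℝ} (ha : 0 ≤ a) (hab : a ≤ b) :
    Real.tanh a ≤ Real.tanh b := by
  rw [Real.tanh_eq_sinh_div_cosh, Real.tanh_eq_sinh_div_cosh,
    div_le_div_iff₀ (Real.cosh_pos a) (Real.cosh_pos b)]
  have h : 0 ≤ Real.sinh (b - a) := Real.sinh_nonneg_iff.2 (by linarith)
  rw [Real.sinh_sub] at h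
  nlinarith

lemma tanh_le_one (x : ℝ) : Real.tanh x ≤ 1 := by
  rw [Real.tanh_eq_sinh_div_cosh, div_le_one (Real.cosh_pos x)]
  nlinarith [Real.sinh_lt_cosh x]

lemma key_bound : ∀ x : ℝ, 1 < x →
    (deriv (fun y : ℝ => Real.sqrt (Real.tanh y / y)) x) ^ 2
      ≤ (1 / Real.tanh 1) * x ^ (-(3 : ℝ)) := by
  intro x hx
  have hx0 : (0 : ℝ) < x := by linarith
  have ht1 : 0 < Real.tanh 1 := by
    rw [Real.tanh_eq_sinh_div_cosh]
    exact div_pos (Real.sinh_pos_iff.2 one_pos) (Real.cosh_pos 1)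
  have ht : 0 < Real.tanh x := lt_of_lt_of_le ht1 (tanh_mono zero_le_one hx.le)
  have hg0 : 0 < Real.tanh x / x := div_pos ht hx0
  -- derivative of tanh y / y
  have hg : HasDerivAt (fun y : ℝ => Real.tanh y / y)
      ((1 / Real.cosh x ^ 2 * x - Real.tanh x * 1) / x ^ 2) x :=
    (hasDerivAt_tanh' x).div (hasDerivAt_id x) (ne_of_gt hx0)
  have hm := hg.sqrt (ne_of_gt hg0)
  rw [hm.deriv]
  set D : ℝ := (1 / Real.cosh x ^ 2 * x - Real.tanh x * 1) / x ^ 2 with hD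
  have hsq : Real.sqrt (Real.tanh x / x) ^ 2 = Real.tanh x / x :=
    Real.sq_sqrt hg0.le
  have hsqpos : 0 < Real.sqrt (Real.tanh x / x) := Real.sqrt_pos.2 hg0
  have hrw : (D / (2 * Real.sqrt (Real.tanh x / x))) ^ 2
      = D ^ 2 * x / (4 * Real.tanh x) := by
    rw [div_pow, mul_pow, hsq,
      show (2:ℝ) ^ 2 * (Real.tanh x / x) = 4 * Real.tanh x / x by ring,
      div_div_eq_mul_div]
  rw [hrw]
  -- bound D^2 ≤ 4 / x^4
  have hcosh : x ≤ Real.cosh x ^ 2 := by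
    have h1 : x + 1 ≤ Real.exp x := Real.add_one_le_exp x
    have h2 : Real.exp x / 2 ≤ Real.cosh x := by
      rw [Real.cosh_eq]
      have := (Real.exp_pos (-x)).le
      linarith
    nlinarith [Real.exp_pos x]
  have hnum : |1 / Real.cosh x ^ 2 * x - Real.tanh x * 1| ≤ 2 := by
    rw [abs_le]
    have hc2 : 0 < Real.cosh x ^ 2 := by positivity
    have h3 : 1 / Real.cosh x ^ 2 * x ≤ 1 := by
      rw [div_mul_eq_mul_div, one_mul, div_le_one hc2]; exact hcosh
    have h4 : 0 ≤ 1 / Real.cosh x ^ 2 * x := by positivity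
    have h5 := tanh_le_one x
    constructor <;> nlinarith
  have hD2 : D ^ 2 ≤ 4 / x ^ 4 := by
    rw [hD, div_pow]
    have : (1 / Real.cosh x ^ 2 * x - Real.tanh x * 1) ^ 2 ≤ 4 := by
      nlinarith [sq_abs (1 / Real.cosh x ^ 2 * x - Real.tanh x * 1),
        abs_nonneg (1 / Real.cosh x ^ 2 * x - Real.tanh x * 1), hnum]
    have hx4 : (0:ℝ) < x ^ 4 := by positivity
    rw [div_le_div_iff₀ (by positivity) hx4]
    nlinarith
  -- conclude
  have hrpow : x ^ (-(3 : ℝ)) = 1 / x ^ 3 := by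
    rw [Real.rpow_neg hx0.le, one_div]
    norm_num
  rw [hrpow]
  have htx : Real.tanh 1 ≤ Real.tanh x := tanh_mono zero_le_one hx.le
  have h1 : D ^ 2 * x / (4 * Real.tanh x) ≤ (4 / x ^ 4) * x / (4 * Real.tanh 1) := by
    apply div_le_div₀ (by positivity) _ (by positivity) (by nlinarith)
    have : 0 ≤ x := hx0.le
    nlinarith [sq_nonneg D]
  refine h1.trans (le_of_eq ?_)
  field_simp

theorem m_deriv_decay :
    (∃ M C : ℝ, 0 < M ∧ 0 < C ∧
      ∀ x : ℝ, M < x →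
        (deriv (fun y : ℝ => Real.sqrt (Real.tanh y / y)) x) ^ 2 ≤ C * x ^ (-(3 : ℝ))) ∧
    MeasureTheory.IntegrableOn
      (fun x : ℝ => (deriv (fun y : ℝ => Real.sqrt (Real.tanh y / y)) x) ^ 2)
      (Set.Ioi 1) := by
  have ht1 : 0 < Real.tanh 1 := by
    rw [Real.tanh_eq_sinh_div_cosh]
    exact div_pos (Real.sinh_pos_iff.2 one_pos) (Real.cosh_pos 1)
  constructor
  · exact ⟨1, 1 / Real.tanh 1, one_pos, by positivity, key_bound⟩
  · have hint : IntegrableOn (fun x : ℝ => (1 / Real.tanh 1) * x ^ (-(3 : ℝ)))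
        (Set.Ioi 1) := by
      exact (integrableOn_Ioi_rpow_of_lt (by norm_num) one_pos).const_mul _
    apply hint.integrable.mono'
    · exact ((measurable_deriv _).pow_const 2).aestronglyMeasurable
    · rw [ae_restrict_iff' measurableSet_Ioi]
      filter_upwards with x hx
      rw [Real.norm_eq_abs, abs_of_nonneg (sq_nonneg _)]
      exact key_bound x hx
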